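/- arXiv:2002.03517 — 2 statements merged into one kernel-verified Lean document; each statement's English description precedes it below -/
import Mathlib

section
/- Fix p ≥ 2 and let D be a probability distribution on ℝᵈ such that for some ε > 0 and δ ∈ (0,1], every v ∈ ℝᵈ with ‖v‖_p ≤ ε satisfies tv(D, D+v) ≤ δ. Then E_{η~D}[‖η‖₂²] ≥ (ε² d^{2−2/p}/800)·(1−δ)/δ². -/
open MeasureTheory

/-- Total variation distance between two measures. -/
noncomputable def tv {α : Type*} [MeasurableSpace α] (P Q : Measure α) : ℝ :=
  ⨆ A : {s : Set α // MeasurableSet s}, |(P A.1).toReal - (Q A.1).toReal|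

/-- The ℓ_p norm of a vector in ℝᵈ, for `p : ℝ≥0∞` (with `p = ∞` giving the sup norm). -/
noncomputable def lpNorm {d : ℕ} (p : ENNReal) (v : EuclideanSpace ℝ (Fin d)) : ℝ :=
  if p = ⊤ then ⨆ i, |v i| else (∑ i, |v i| ^ p.toReal) ^ (1 / p.toReal)

open Finset
open scoped ENNReal NNReal
section AuxSOShift


-- Hadamard-type character
def chi (a b : Bool) : ℝ := if a && b then -1 else 1

def had {m : ℕ} (a x : Fin m → Bool) : ℝ := ∏ j, chi (a j) (x j)

lemma chi_abs (a b : Bool) : |chi a b| = 1 := by cases a <;> cases b <;> simp [chi]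

lemma had_abs {m : ℕ} (a x : Fin m → Bool) : |had a x| = 1 := by
  rw [had, Finset.abs_prod]
  simp [chi_abs]

lemma had_orth {m : ℕ} (a a' : Fin m → Bool) :
    ∑ x : Fin m → Bool, had a x * had a' x = if a = a' then (2:ℝ)^m else 0 := by
  have : ∀ x : Fin m → Bool, had a x * had a' x = ∏ j, (chi (a j) (x j) * chi (a' j) (x j)) := by
    intro x; rw [had, had, ← Finset.prod_mul_distrib]
  simp_rw [this]
  rw [← Fintype.piFinset_univ, Finset.sum_prod_piFinset univ fun j b => chi (a j) b * chi (a' j) b]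
  by_cases h : a = a'
  · subst h
    simp only [if_pos rfl]
    have : ∀ j : Fin m, ∑ b : Bool, chi (a j) b * chi (a j) b = 2 := by
      intro j; cases a j <;> simp [chi] <;> norm_num
    rw [Finset.prod_congr rfl fun j _ => this j]
    simp
  · rw [if_neg h]
    obtain ⟨j0, hj0⟩ := Function.ne_iff.mp h
    apply Finset.prod_eq_zero (Finset.mem_univ j0)
    revert hj0; cases a j0 <;> cases a' j0 <;> simp [chi]


lemma sum_g_extend {α : Type*} [Fintype α] {β : Type*} [Fintype β] [DecidableEq β]
    (e : α → β) (he : Function.Injective e) (f : α → ℝ) (g : ℝ → ℝ) (hg : g 0 = 0) :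
    ∑ i, g (Function.extend e f 0 i) = ∑ x, g (f x) := by
  classical
  have h1 : ∑ i ∈ Finset.univ.image e, g (Function.extend e f 0 i)
      = ∑ i : β, g (Function.extend e f 0 i) := by
    apply Finset.sum_subset (Finset.subset_univ _)
    intro i _ hi
    rw [Function.extend_apply' _ _ _ (by simpa using hi)]
    simpa using hg
  rw [← h1, Finset.sum_image (by intro x _ y _ h; exact he h)]
  simp [he.extend_apply]


lemma abs_le_tv {α : Type*} [MeasurableSpace α] (P Q : Measure α)
    [IsProbabilityMeasure P] [IsProbabilityMeasure Q] {A : Set α} (hA : MeasurableSet A) :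
    |(P A).toReal - (Q A).toReal| ≤ tv P Q := by
  rw [tv]
  apply le_ciSup_of_le (f := fun A : {s : Set α // MeasurableSet s} => |(P A.1).toReal - (Q A.1).toReal|) _ ⟨A, hA⟩ le_rfl
  refine ⟨2, ?_⟩
  rintro x ⟨⟨B, hB⟩, rfl⟩
  have h1 : (P B).toReal ≤ 1 := by
    simpa using ENNReal.toReal_mono (by simp) (prob_le_one (μ := P) (s := B))
  have h2 : (Q B).toReal ≤ 1 := by
    simpa using ENNReal.toReal_mono (by simp) (prob_le_one (μ := Q) (s := B))
  have h3 : 0 ≤ (P B).toReal := ENNReal.toReal_nonneg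
  have h4 : 0 ≤ (Q B).toReal := ENNReal.toReal_nonneg
  rw [abs_le]; constructor <;> nlinarith

variable {d : ℕ}

local notation "E" => EuclideanSpace ℝ (Fin d)

lemma meas_inner_set (u : E) (s : ℝ) : MeasurableSet {η : E | s < inner ℝ u η} := by
  have : Continuous fun η : E => (inner ℝ u η : ℝ) := continuous_const.inner continuous_id
  exact measurableSet_lt measurable_const this.measurable

lemma core_step (D : Measure E) [IsProbabilityMeasure D]
    (δ : ℝ) (v : E) (htv : tv D (D.map (· + v)) ≤ δ)
    (u : E) (t : ℝ) (huv : (inner ℝ u v : ℝ) = t) (s : ℝ) :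
    (D {η : E | s - t < inner ℝ u η}).toReal - δ ≤ (D {η : E | s < inner ℝ u η}).toReal := by
  have hmeas : Measurable fun η : E => η + v := measurable_add_const v
  haveI : IsProbabilityMeasure (D.map (· + v)) := Measure.isProbabilityMeasure_map hmeas.aemeasurable
  have hmap : D.map (· + v) {η : E | s < inner ℝ u η} = D {η : E | s - t < inner ℝ u η} := by
    rw [Measure.map_apply hmeas (meas_inner_set u s)]
    congr 1
    ext η
    simp only [Set.mem_preimage, Set.mem_setOf_eq, inner_add_right, huv]
    constructor <;> intro h <;> linarith
  have := abs_le_tv D (D.map (· + v)) (meas_inner_set u s)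
  rw [hmap] at this
  have h2 := abs_le (a := (D {η : E | s < inner ℝ u η}).toReal - (D {η : E | s - t < inner ℝ u η}).toReal) |>.mp this
  linarith [h2.1, htv]

lemma core_iter (D : Measure E) [IsProbabilityMeasure D]
    (δ : ℝ) (v : E) (htv : tv D (D.map (· + v)) ≤ δ)
    (u : E) (t : ℝ) (huv : (inner ℝ u v : ℝ) = t) (s : ℝ) (n : ℕ) :
    (D {η : E | s - n * t < inner ℝ u η}).toReal - n * δ ≤ (D {η : E | s < inner ℝ u η}).toReal := by
  induction n generalizing s with
  | zero => simp
  | succ n ih =>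
    have h1 := ih (s - t)
    have h2 := core_step D δ v htv u t huv s
    have he : s - t - n * t = s - (n + 1 : ℕ) * t := by push_cast; ring
    rw [he] at h1
    push_cast
    push_cast at h1
    linarith

lemma core_k (D : Measure E) [IsProbabilityMeasure D]
    (δ : ℝ) (v : E) (htv : tv D (D.map (· + v)) ≤ δ)
    (u : E) (t : ℝ) (ht : 0 < t) (huv : (inner ℝ u v : ℝ) = t) (k : ℕ) (hk : 1 ≤ k) :
    ENNReal.ofReal (((k : ℝ) * t / 2) ^ 2 * (1 - k * δ)) ≤
      ∫⁻ η, ENNReal.ofReal ((inner ℝ u η : ℝ) ^ 2) ∂D := by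
  set s₀ : ℝ := (k : ℝ) * t / 2 with hs₀def
  have hs₀ : 0 < s₀ := by
    have : (1:ℝ) ≤ (k:ℝ) := by exact_mod_cast hk
    have := ht
    rw [hs₀def]; positivity
  set A : Set E := {η : E | -s₀ < inner ℝ u η} with hAdef
  set B₁ : Set E := {η : E | s₀ < inner ℝ u η} with hB₁def
  have hB₂ : MeasurableSet Aᶜ := (meas_inner_set u (-s₀)).compl
  -- lower bound on masses
  have hiter := core_iter D δ v htv u t huv s₀ k
  have hsub : s₀ - (k : ℝ) * t = -s₀ := by rw [hs₀def]; ring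
  rw [hsub] at hiter
  have hcompl : (D A).toReal + (D Aᶜ).toReal = 1 := by
    have h := measure_add_measure_compl (μ := D) (meas_inner_set u (-s₀))
    have hA_ne : D A ≠ ⊤ := measure_ne_top D A
    have hAc_ne : D Aᶜ ≠ ⊤ := measure_ne_top D Aᶜ
    have := congrArg ENNReal.toReal h
    rw [ENNReal.toReal_add hA_ne hAc_ne] at this
    simpa using this
  have hmass : 1 - (k:ℝ) * δ ≤ (D B₁).toReal + (D Aᶜ).toReal := by linarith
  -- lintegral bound
  have hdisj : Disjoint B₁ Aᶜ := by
    rw [Set.disjoint_iff]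
    rintro η ⟨h1, h2⟩
    simp only [hB₁def, hAdef, Set.mem_setOf_eq, Set.mem_compl_iff, not_lt] at h1 h2
    exfalso; linarith
  have hunion : D (B₁ ∪ Aᶜ) = D B₁ + D Aᶜ := measure_union hdisj hB₂
  calc ENNReal.ofReal (s₀ ^ 2 * (1 - k * δ))
      ≤ ENNReal.ofReal (s₀ ^ 2) * ENNReal.ofReal (1 - k * δ) := by
        rw [← ENNReal.ofReal_mul (by positivity)]
    _ ≤ ENNReal.ofReal (s₀ ^ 2) * D (B₁ ∪ Aᶜ) := by
        gcongr
        rw [hunion]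
        calc ENNReal.ofReal (1 - (k:ℝ) * δ) ≤ ENNReal.ofReal ((D B₁).toReal + (D Aᶜ).toReal) :=
              ENNReal.ofReal_le_ofReal hmass
          _ = D B₁ + D Aᶜ := by
              rw [ENNReal.ofReal_add ENNReal.toReal_nonneg ENNReal.toReal_nonneg,
                ENNReal.ofReal_toReal (measure_ne_top D B₁), ENNReal.ofReal_toReal (measure_ne_top D Aᶜ)]
    _ = ∫⁻ _ in B₁ ∪ Aᶜ, ENNReal.ofReal (s₀ ^ 2) ∂D := by rw [setLIntegral_const]
    _ ≤ ∫⁻ η in B₁ ∪ Aᶜ, ENNReal.ofReal ((inner ℝ u η : ℝ) ^ 2) ∂D := by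
        have hm : Measurable fun η : E => ENNReal.ofReal ((inner ℝ u η : ℝ) ^ 2) :=
          ENNReal.measurable_ofReal.comp
            (((continuous_const.inner continuous_id).measurable).pow_const 2)
        apply setLIntegral_mono hm
        · intro η hη
          apply ENNReal.ofReal_le_ofReal
          rcases hη with h | h
          · have : s₀ < inner ℝ u η := h
            nlinarith
          · have : ¬ (-s₀ < (inner ℝ u η : ℝ)) := h
            push_neg at this
            nlinarith
    _ ≤ ∫⁻ η, ENNReal.ofReal ((inner ℝ u η : ℝ) ^ 2) ∂D := setLIntegral_le_lintegral _ _

lemma core (D : Measure E) [IsProbabilityMeasure D]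
    (δ : ℝ) (hδ0 : 0 < δ) (hδ1 : δ ≤ 1) (v : E) (hv : v ≠ 0)
    (htv : tv D (D.map (· + v)) ≤ δ) :
    ENNReal.ofReal (‖v‖ ^ 2 / 200 * ((1 - δ) / δ ^ 2)) ≤
      ∫⁻ η, ENNReal.ofReal ((inner ℝ ((‖v‖⁻¹ • v : E)) η : ℝ) ^ 2) ∂D := by
  set t : ℝ := ‖v‖ with htdef
  have ht : 0 < t := by rw [htdef]; exact norm_pos_iff.mpr hv
  set u : E := ‖v‖⁻¹ • v with hudef
  have huv : (inner ℝ u v : ℝ) = t := by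
    have hn : ‖v‖ ≠ 0 := ne_of_gt (norm_pos_iff.mpr hv)
    rw [hudef, real_inner_smul_left, real_inner_self_eq_norm_sq, htdef]
    field_simp
  by_cases hδq : 1/4 ≤ δ
  · refine le_trans (ENNReal.ofReal_le_ofReal ?_) (core_k D δ v htv u t ht huv 1 le_rfl)
    push_cast
    have h1 : t ^ 2 / 200 * ((1 - δ) / δ ^ 2) ≤ t ^ 2 / 200 * ((1 - δ) * 16) := by
      apply mul_le_mul_of_nonneg_left _ (by positivity)
      rw [div_le_iff₀ (by positivity)]
      nlinarith [mul_nonneg (sub_nonneg.mpr hδ1) (mul_nonneg (by linarith : (0:ℝ) ≤ 4*δ - 1) (by linarith : (0:ℝ) ≤ 4*δ + 1))]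
    calc t ^ 2 / 200 * ((1 - δ) / δ ^ 2) ≤ t ^ 2 / 200 * ((1 - δ) * 16) := h1
      _ ≤ (1 * t / 2) ^ 2 * (1 - 1 * δ) := by nlinarith
  · push_neg at hδq
    set k : ℕ := ⌊1 / (2 * δ)⌋₊ with hkdef
    have hk2 : (2 : ℕ) ≤ k := by
      rw [hkdef]
      apply Nat.le_floor
      rw [le_div_iff₀ (by positivity)]
      push_cast; linarith
    have hk1 : 1 ≤ k := le_trans (by norm_num) hk2
    have hkle : (k : ℝ) ≤ 1 / (2 * δ) := Nat.floor_le (by positivity)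
    have hkge : 1 / (4 * δ) ≤ (k : ℝ) := by
      have := Nat.lt_floor_add_one (1 / (2 * δ))
      rw [← hkdef] at this
      have h4 : 1 / (4 * δ) + 1 ≤ 1 / (2 * δ) := by
        rw [div_add' _ _ _ (by positivity), div_le_div_iff₀ (by positivity) (by positivity)]
        nlinarith
      linarith
    refine le_trans (ENNReal.ofReal_le_ofReal ?_) (core_k D δ v htv u t ht huv k hk1)
    have hkδ : (k : ℝ) * δ ≤ 1 / 2 := by
      rw [← le_div_iff₀ hδ0] at *
      calc (k:ℝ) ≤ 1 / (2*δ) := hkle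
        _ = 1/2/δ := by ring_nf
    have hbase : t / (8 * δ) ≤ (k:ℝ) * t / 2 := by
      have hm := mul_le_mul_of_nonneg_right hkge (le_of_lt (by positivity : (0:ℝ) < t/2))
      calc t / (8*δ) = 1/(4*δ) * (t/2) := by ring
        _ ≤ (k:ℝ) * (t/2) := hm
        _ = (k:ℝ)*t/2 := by ring
    have hsq : t ^ 2 / (64 * δ ^ 2) ≤ ((k:ℝ) * t / 2) ^ 2 := by
      have h0 : 0 ≤ t/(8*δ) := by positivity
      calc t^2/(64*δ^2) = (t/(8*δ))^2 := by ring
        _ ≤ ((k:ℝ)*t/2)^2 := by nlinarith [hbase, h0]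
    have h5 : t ^ 2 / (128 * δ ^ 2) ≤ ((k:ℝ) * t / 2) ^ 2 * (1 - k * δ) := by
      have h12 : (1:ℝ)/2 ≤ 1 - k * δ := by linarith
      have hmm := mul_le_mul hsq h12 (by norm_num) (sq_nonneg ((k:ℝ)*t/2))
      calc t^2/(128*δ^2) = t^2/(64*δ^2) * (1/2) := by ring
        _ ≤ _ := hmm
    calc t ^ 2 / 200 * ((1 - δ) / δ ^ 2) = t ^ 2 * (1 - δ) / (200 * δ ^ 2) := by ring
      _ ≤ t ^ 2 / (128 * δ ^ 2) := by
          rw [div_le_div_iff₀ (by positivity) (by positivity)]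
          nlinarith [mul_nonneg (mul_nonneg (sq_nonneg t) (sq_nonneg δ)) hδ0.le]
      _ ≤ _ := h5



end AuxSOShift

theorem stmt8 {d : ℕ} (p : ENNReal) (hp : 2 ≤ p)
    (D : Measure (EuclideanSpace ℝ (Fin d))) [IsProbabilityMeasure D]
    (ε δ : ℝ) (hε : 0 < ε) (hδ0 : 0 < δ) (hδ1 : δ ≤ 1)
    (hTV : ∀ v : EuclideanSpace ℝ (Fin d), lpNorm p v ≤ ε → tv D (D.map (· + v)) ≤ δ) :
    ENNReal.ofReal (ε ^ 2 * (d : ℝ) ^ (2 - 2 / p.toReal) / 800 * ((1 - δ) / δ ^ 2)) ≤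
      ∫⁻ η, ENNReal.ofReal (‖η‖ ^ 2) ∂D := by
  classical
  have hQ : 0 ≤ (1 - δ) / δ ^ 2 := div_nonneg (by linarith) (sq_nonneg δ)
  have hx : 0 ≤ 1 / p.toReal ∧ 1 / p.toReal ≤ 1 / 2 := by
    by_cases hptop : p = ⊤
    · norm_num [hptop]
    · have h2 : (2:ℝ) ≤ p.toReal := by simpa using ENNReal.toReal_mono hptop hp
      constructor
      · positivity
      · rw [div_le_div_iff₀ (by linarith) (by norm_num)]
        linarith
  have hxe : 2 / p.toReal = 2 * (1 / p.toReal) := by ring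
  have he1 : (1:ℝ) ≤ 2 - 2 / p.toReal := by rw [hxe]; linarith [hx.1, hx.2]
  have he2 : 2 - 2 / p.toReal ≤ 2 := by rw [hxe]; linarith [hx.1]
  rcases Nat.eq_zero_or_pos d with hd | hd
  · subst hd
    have h0 : ((0:ℕ):ℝ) ^ ((2:ℝ) - 2 / p.toReal) = 0 := by
      rw [Nat.cast_zero, Real.zero_rpow (by linarith : (2:ℝ) - 2/p.toReal ≠ 0)]
    rw [h0]
    simp
  · have hd0 : d ≠ 0 := hd.ne'
    set m : ℕ := Nat.log 2 d with hm
    set b : ℕ := 2 ^ m with hb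
    have hbd : b ≤ d := Nat.pow_log_le_self 2 hd0
    have hdb : d < 2 * b := by
      have h := Nat.lt_pow_succ_log_self (by norm_num : 1 < 2) d
      rw [pow_succ, ← hm] at h
      omega
    have hcard : Fintype.card (Fin m → Bool) ≤ Fintype.card (Fin d) := by
      simp only [Fintype.card_fun, Fintype.card_bool, Fintype.card_fin]
      omega
    obtain ⟨emb⟩ := Function.Embedding.nonempty_of_card_le hcard
    set ee : (Fin m → Bool) → Fin d := ⇑emb with heedef
    have hee : Function.Injective ee := emb.injective
    set c : ℝ := ε * (b:ℝ) ^ (-(1 / p.toReal)) with hcdef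
    have hbR : (0:ℝ) < (b:ℝ) := by
      have : 0 < b := by rw [hb]; positivity
      exact_mod_cast this
    have hc0 : 0 < c := mul_pos hε (Real.rpow_pos_of_pos hbR _)
    set V : (Fin m → Bool) → EuclideanSpace ℝ (Fin d) :=
      fun a => WithLp.toLp 2 (fun i => c * Function.extend ee (had a) 0 i : Fin d → ℝ) with hVdef
    have hVapp : ∀ a i, V a i = c * Function.extend ee (had a) 0 i := fun a i => rfl
    have hbRcast : ((b:ℕ):ℝ) = (2:ℝ)^m := by rw [hb]; push_cast; ring
    have hinner : ∀ a a', (inner ℝ (V a) (V a') : ℝ) = c ^ 2 * (if a = a' then ((b:ℕ):ℝ) else 0) := by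
      intro a a'
      have h1 : (inner ℝ (V a) (V a') : ℝ) = ∑ i, V a i * V a' i := by
        simp [PiLp.inner_apply, RCLike.inner_apply, mul_comm]
      rw [h1]
      have h2 : ∀ i, V a i * V a' i
          = c ^ 2 * Function.extend ee (fun y => had a y * had a' y) 0 i := by
        intro i
        by_cases h : ∃ y, ee y = i
        · obtain ⟨y, rfl⟩ := h
          rw [hVapp, hVapp, hee.extend_apply, hee.extend_apply, hee.extend_apply]
          ring
        · rw [hVapp, hVapp, Function.extend_apply' _ _ _ h, Function.extend_apply' _ _ _ h,
            Function.extend_apply' _ _ _ h]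
          simp
      simp_rw [h2]
      rw [← Finset.mul_sum]
      have h3 := sum_g_extend ee hee (fun y => had a y * had a' y) id rfl
      simp only [id] at h3
      rw [h3, had_orth, hbRcast]
    have hVnormsq : ∀ a, ‖V a‖ ^ 2 = c ^ 2 * ((b:ℕ):ℝ) := by
      intro a
      have h := hinner a a
      rw [if_pos rfl] at h
      rw [← real_inner_self_eq_norm_sq, h]
    have hVne : ∀ a, V a ≠ 0 := by
      intro a h
      have h1 := hVnormsq a
      rw [h, norm_zero] at h1
      norm_num at h1
      rcases h1 with h1 | h1
      · exact absurd h1 hc0.ne'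
      · rw [hb] at h1
        exact absurd h1 (by positivity)
    have hVnorm_pos : ∀ a, (0:ℝ) < ‖V a‖ := fun a => norm_pos_iff.mpr (hVne a)
    set U : (Fin m → Bool) → EuclideanSpace ℝ (Fin d) := fun a => ‖V a‖⁻¹ • V a with hUdef
    have hU : Orthonormal ℝ U := by
      rw [orthonormal_iff_ite]
      intro a a'
      rw [hUdef]
      simp only
      rw [real_inner_smul_left, real_inner_smul_right, hinner]
      by_cases h : a = a'
      · subst h
        rw [if_pos rfl, if_pos rfl, ← hVnormsq a]
        have h2 := hVnorm_pos a
        field_simp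
      · rw [if_neg h, if_neg h]
        ring
    have hlp : ∀ a, lpNorm p (V a) ≤ ε := by
      intro a
      by_cases hptop : p = ⊤
      · rw [_root_.lpNorm, if_pos hptop]
        have hc_eq : c = ε := by
          rw [hcdef, hptop]
          simp
        haveI : Nonempty (Fin d) := ⟨⟨0, hd⟩⟩
        apply ciSup_le
        intro i
        rw [hVapp]
        by_cases h : ∃ y, ee y = i
        · obtain ⟨y, rfl⟩ := h
          rw [hee.extend_apply, abs_mul, had_abs, mul_one, abs_of_pos hc0, hc_eq]
        · rw [Function.extend_apply' _ _ _ h]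
          simp [hε.le]
      · have hpt2 : (2:ℝ) ≤ p.toReal := by simpa using ENNReal.toReal_mono hptop hp
        have hpt0 : 0 < p.toReal := by linarith
        rw [_root_.lpNorm, if_neg hptop]
        have hsum : ∑ i, |V a i| ^ p.toReal = ((b:ℕ):ℝ) * c ^ p.toReal := by
          have hg : (fun y : ℝ => |c * y| ^ p.toReal) 0 = 0 := by
            simp [Real.zero_rpow hpt0.ne']
          have h3 := sum_g_extend ee hee (had a) (fun y => |c * y| ^ p.toReal) hg
          calc ∑ i, |V a i| ^ p.toReal
              = ∑ i, |c * Function.extend ee (had a) 0 i| ^ p.toReal := rfl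
            _ = ∑ y : Fin m → Bool, |c * had a y| ^ p.toReal := h3
            _ = ∑ _y : Fin m → Bool, c ^ p.toReal := by
                apply Finset.sum_congr rfl
                intro y _
                rw [abs_mul, had_abs, mul_one, abs_of_pos hc0]
            _ = ((b:ℕ):ℝ) * c ^ p.toReal := by
                rw [Finset.sum_const, nsmul_eq_mul]
                congr 1
                simp [hbRcast]
        rw [hsum, Real.mul_rpow (le_of_lt hbR) (Real.rpow_nonneg hc0.le _)]
        have hcc : (c ^ p.toReal) ^ (1 / p.toReal) = c := by
          rw [← Real.rpow_mul hc0.le, mul_one_div_cancel hpt0.ne', Real.rpow_one]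
        rw [hcc, hcdef]
        have hbb : ((b:ℕ):ℝ)^(1/p.toReal) * (((b:ℕ):ℝ)^(-(1/p.toReal))) = 1 := by
          rw [← Real.rpow_add hbR]
          simp
        calc ((b:ℕ):ℝ)^(1/p.toReal) * (ε * ((b:ℕ):ℝ)^(-(1/p.toReal)))
            = ε * (((b:ℕ):ℝ)^(1/p.toReal) * ((b:ℕ):ℝ)^(-(1/p.toReal))) := by ring
          _ = ε := by rw [hbb, mul_one]
          _ ≤ ε := le_rfl
    have hcore : ∀ a, ENNReal.ofReal (c^2 * ((b:ℕ):ℝ) / 200 * ((1 - δ)/δ^2)) ≤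
        ∫⁻ η, ENNReal.ofReal ((inner ℝ (U a) η : ℝ)^2) ∂D := by
      intro a
      have h := core D δ hδ0 hδ1 (V a) (hVne a) (hTV (V a) (hlp a))
      rw [hVnormsq a] at h
      exact h
    have hmeas : ∀ a : Fin m → Bool,
        Measurable fun η : EuclideanSpace ℝ (Fin d) => ENNReal.ofReal ((inner ℝ (U a) η : ℝ)^2) :=
      fun a => ENNReal.measurable_ofReal.comp
        (((continuous_const.inner continuous_id).measurable).pow_const 2)
    have hbessel : ∀ η : EuclideanSpace ℝ (Fin d),
        ∑ a : Fin m → Bool, ENNReal.ofReal ((inner ℝ (U a) η : ℝ)^2)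
        ≤ ENNReal.ofReal (‖η‖^2) := by
      intro η
      rw [← ENNReal.ofReal_sum_of_nonneg (fun a _ => sq_nonneg _)]
      apply ENNReal.ofReal_le_ofReal
      have h := hU.sum_inner_products_le (s := Finset.univ) η
      simpa [Real.norm_eq_abs, sq_abs] using h
    have hchain : ((b:ℕ) : ℝ≥0∞) * ENNReal.ofReal (c^2*((b:ℕ):ℝ)/200 * ((1-δ)/δ^2))
        ≤ ∫⁻ η, ENNReal.ofReal (‖η‖^2) ∂D := by
      have hcardb : (Fintype.card (Fin m → Bool)) = b := by
        simp [hb, Fintype.card_fun]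
      calc ((b:ℕ) : ℝ≥0∞) * ENNReal.ofReal (c^2*((b:ℕ):ℝ)/200 * ((1-δ)/δ^2))
          = ∑ _a : Fin m → Bool, ENNReal.ofReal (c^2*((b:ℕ):ℝ)/200 * ((1-δ)/δ^2)) := by
            rw [Finset.sum_const, nsmul_eq_mul]
            congr 1
            simp [hcardb]
        _ ≤ ∑ a : Fin m → Bool, ∫⁻ η, ENNReal.ofReal ((inner ℝ (U a) η : ℝ)^2) ∂D :=
            Finset.sum_le_sum (fun a _ => hcore a)
        _ = ∫⁻ η, ∑ a : Fin m → Bool, ENNReal.ofReal ((inner ℝ (U a) η : ℝ)^2) ∂D :=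
            (lintegral_finset_sum _ (fun a _ => hmeas a)).symm
        _ ≤ ∫⁻ η, ENNReal.ofReal (‖η‖^2) ∂D := lintegral_mono hbessel
    refine le_trans ?_ hchain
    rw [show ((b:ℕ) : ℝ≥0∞) = ENNReal.ofReal ((b:ℕ):ℝ) from (ENNReal.ofReal_natCast b).symm,
      ← ENNReal.ofReal_mul (Nat.cast_nonneg b)]
    apply ENNReal.ofReal_le_ofReal
    -- final real arithmetic
    have hbc : ((b:ℕ):ℝ)^2 * c^2 = ε^2 * ((b:ℕ):ℝ)^((2:ℝ) - 2/p.toReal) := by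
      rw [hcdef, mul_pow]
      have h1 : (((b:ℕ):ℝ) ^ (-(1/p.toReal)))^2 = ((b:ℕ):ℝ) ^ (-(1/p.toReal) * 2) := by
        rw [← Real.rpow_natCast (((b:ℕ):ℝ) ^ (-(1/p.toReal))) 2, ← Real.rpow_mul hbR.le]
        norm_num
      have h2 : (((b:ℕ):ℝ))^(2:ℕ) = ((b:ℕ):ℝ) ^ ((2:ℕ):ℝ) := (Real.rpow_natCast _ 2).symm
      rw [h1, h2, ← mul_assoc, mul_comm (((b:ℕ):ℝ) ^ ((2:ℕ):ℝ)) (ε^2), mul_assoc,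
        ← Real.rpow_add hbR]
      congr 1
      push_cast
      ring
    have hdle : (d:ℝ) ≤ 2*((b:ℕ):ℝ) := by exact_mod_cast hdb.le
    have hd4 : (d:ℝ)^((2:ℝ) - 2/p.toReal) ≤ 4 * ((b:ℕ):ℝ)^((2:ℝ) - 2/p.toReal) := by
      calc (d:ℝ)^((2:ℝ) - 2/p.toReal) ≤ (2*((b:ℕ):ℝ))^((2:ℝ) - 2/p.toReal) :=
            Real.rpow_le_rpow (Nat.cast_nonneg d) hdle (by linarith)
        _ = (2:ℝ)^((2:ℝ) - 2/p.toReal) * ((b:ℕ):ℝ)^((2:ℝ) - 2/p.toReal) :=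
            Real.mul_rpow (by norm_num) hbR.le
        _ ≤ 4 * ((b:ℕ):ℝ)^((2:ℝ) - 2/p.toReal) := by
            have h2e : (2:ℝ)^((2:ℝ) - 2/p.toReal) ≤ (2:ℝ)^((2:ℕ):ℝ) :=
              Real.rpow_le_rpow_of_exponent_le one_le_two (by push_cast; linarith)
            have h22 : (2:ℝ)^((2:ℕ):ℝ) = 4 := by
              rw [Real.rpow_natCast]
              norm_num
            have hbe : 0 ≤ ((b:ℕ):ℝ)^((2:ℝ) - 2/p.toReal) := Real.rpow_nonneg hbR.le _
            nlinarith
    have hKey : ε ^ 2 * (d : ℝ) ^ ((2:ℝ) - 2 / p.toReal) / 800 ≤ ((b:ℕ):ℝ)^2 * c^2 / 200 := by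
      calc ε ^ 2 * (d : ℝ) ^ ((2:ℝ) - 2 / p.toReal) / 800
          ≤ ε ^ 2 * (4 * ((b:ℕ):ℝ)^((2:ℝ) - 2/p.toReal)) / 800 := by
            gcongr
        _ = ε ^ 2 * ((b:ℕ):ℝ)^((2:ℝ) - 2/p.toReal) / 200 := by ring
        _ = ((b:ℕ):ℝ)^2 * c^2 / 200 := by rw [hbc]
    calc ε ^ 2 * (d : ℝ) ^ ((2:ℝ) - 2 / p.toReal) / 800 * ((1 - δ) / δ ^ 2)
        ≤ ((b:ℕ):ℝ)^2 * c^2 / 200 * ((1 - δ) / δ ^ 2) :=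
          mul_le_mul_of_nonneg_right hKey hQ
      _ = ((b:ℕ):ℝ) * (c^2*((b:ℕ):ℝ)/200 * ((1-δ)/δ^2)) := by ring
end

section
/- Suppose tv(D, D+v) > δ for some distribution D on ℝᵈ and vector v. Then there exists a randomized binary classifier f : ℝᵈ → {0,1} such that the smoothed classifier g(·; D, f) satisfies Δ(0; D, f) > δ but g(v; D, f) ≠ g(0; D, f). -/
open MeasureTheory

attribute [local instance] Classical.propDecidable

/-- The score of class `y` at point `x` for the smoothing distribution `D` and
(randomized) base classifier `f`: the probability that `f(x + η) = y` for `η ~ D`. -/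
noncomputable def score {d : ℕ} {Y : Type} (D : Measure (EuclideanSpace ℝ (Fin d)))
    (f : EuclideanSpace ℝ (Fin d) → PMF Y) (y : Y) (x : EuclideanSpace ℝ (Fin d)) : ENNReal :=
  ∫⁻ η, f (x + η) y ∂D

/-- The smoothed classifier: outputs the class with the highest score, breaking
ties lexicographically (i.e. choosing the least maximizer). -/
noncomputable def gOut {d : ℕ} {Y : Type} [Fintype Y] [LinearOrder Y] [Nonempty Y]
    (D : Measure (EuclideanSpace ℝ (Fin d))) (f : EuclideanSpace ℝ (Fin d) → PMF Y)
    (x : EuclideanSpace ℝ (Fin d)) : Y :=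
  (Finset.univ.filter fun a : Y => ∀ y : Y, score D f y x ≤ score D f a x).min' (by
    obtain ⟨a, -, ha⟩ := Finset.exists_max_image (Finset.univ : Finset Y)
      (fun y => score D f y x) ⟨Classical.arbitrary Y, Finset.mem_univ _⟩
    exact ⟨a, Finset.mem_filter.mpr ⟨Finset.mem_univ _, fun y => ha y (Finset.mem_univ _)⟩⟩)

/-- The gap between the highest score and the runner-up score at `x`. -/
noncomputable def gap {d : ℕ} {Y : Type} [Fintype Y] [LinearOrder Y] [Nonempty Y]
    (D : Measure (EuclideanSpace ℝ (Fin d))) (f : EuclideanSpace ℝ (Fin d) → PMF Y)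
    (x : EuclideanSpace ℝ (Fin d)) : ENNReal :=
  score D f (gOut D f x) x - ⨆ y : {y : Y // y ≠ gOut D f x}, score D f y.1 x

private lemma lint_if {d : ℕ} (D : Measure (EuclideanSpace ℝ (Fin d))) [IsProbabilityMeasure D]
    {T : Set (EuclideanSpace ℝ (Fin d))} (hT : MeasurableSet T) (e r : ENNReal)
    (x : EuclideanSpace ℝ (Fin d)) :
    ∫⁻ η, (if x + η ∈ T then e + r else e) ∂D = e + r * D ((fun η => x + η) ⁻¹' T) := by
  have h1 : (fun η => if x + η ∈ T then e + r else e)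
      = fun η => e + Set.indicator ((fun η => x + η) ⁻¹' T) (fun _ => r) η := by
    funext η
    by_cases hη : x + η ∈ T <;> simp [Set.indicator_apply, hη]
  rw [h1, lintegral_add_left measurable_const, lintegral_const, measure_univ, mul_one,
    lintegral_indicator_const (hT.preimage (measurable_const_add x))]

private lemma lint_if' {d : ℕ} (D : Measure (EuclideanSpace ℝ (Fin d))) [IsProbabilityMeasure D]
    {T : Set (EuclideanSpace ℝ (Fin d))} (hT : MeasurableSet T) (e r : ENNReal)
    (x : EuclideanSpace ℝ (Fin d)) :
    ∫⁻ η, (if x + η ∈ T then e else e + r) ∂D = e + r * D (((fun η => x + η) ⁻¹' T)ᶜ) := by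
  have h1 : (fun η => if x + η ∈ T then e else e + r)
      = fun η => e + Set.indicator (((fun η => x + η) ⁻¹' T)ᶜ) (fun _ => r) η := by
    funext η
    by_cases hη : x + η ∈ T <;> simp [Set.indicator_apply, hη]
  rw [h1, lintegral_add_left measurable_const, lintegral_const, measure_univ, mul_one,
    lintegral_indicator_const (hT.preimage (measurable_const_add x)).compl]

private lemma gOut_spec {d : ℕ} {Y : Type} [Fintype Y] [LinearOrder Y] [Nonempty Y]
    (D : Measure (EuclideanSpace ℝ (Fin d))) (f : EuclideanSpace ℝ (Fin d) → PMF Y)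
    (x : EuclideanSpace ℝ (Fin d)) (y : Y) : score D f y x ≤ score D f (gOut D f x) x := by
  unfold gOut
  exact (Finset.mem_filter.mp (Finset.min'_mem
    (Finset.univ.filter fun a : Y => ∀ y : Y, score D f y x ≤ score D f a x) _)).2 y

private lemma gOut_le {d : ℕ} {Y : Type} [Fintype Y] [LinearOrder Y] [Nonempty Y]
    (D : Measure (EuclideanSpace ℝ (Fin d))) (f : EuclideanSpace ℝ (Fin d) → PMF Y)
    (x : EuclideanSpace ℝ (Fin d)) (a : Y) (h : ∀ y : Y, score D f y x ≤ score D f a x) :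
    gOut D f x ≤ a := by
  unfold gOut
  exact Finset.min'_le _ a (Finset.mem_filter.mpr ⟨Finset.mem_univ _, h⟩)

theorem stmt19 {d : ℕ} (D : Measure (EuclideanSpace ℝ (Fin d))) [IsProbabilityMeasure D]
    (v : EuclideanSpace ℝ (Fin d)) (δ : ℝ) (hδ0 : 0 ≤ δ)
    (h : δ < tv D (D.map (· + v))) :
    ∃ f : EuclideanSpace ℝ (Fin d) → PMF Bool,
      ENNReal.ofReal δ < gap D f 0 ∧ gOut D f v ≠ gOut D f 0 := by
  set Q := D.map (· + v) with hQdef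
  haveI hQprob : IsProbabilityMeasure Q :=
    Measure.isProbabilityMeasure_map (measurable_add_const v).aemeasurable
  have hle1 : ∀ (μ : Measure (EuclideanSpace ℝ (Fin d))) [IsProbabilityMeasure μ]
      (s : Set (EuclideanSpace ℝ (Fin d))), (μ s).toReal ≤ 1 := by
    intro μ _ s
    have := measure_mono (Set.subset_univ s) (μ := μ)
    calc (μ s).toReal ≤ (μ Set.univ).toReal :=
          ENNReal.toReal_mono (measure_ne_top _ _) this
      _ = 1 := by simp
  have hbdd : BddAbove (Set.range fun A : {s : Set (EuclideanSpace ℝ (Fin d)) // MeasurableSet s}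
      => |(D A.1).toReal - (Q A.1).toReal|) := by
    refine ⟨2, ?_⟩
    rintro x ⟨A, rfl⟩
    have h1 := hle1 D A.1
    have h2 := hle1 Q A.1
    have h3 : 0 ≤ (D A.1).toReal := ENNReal.toReal_nonneg
    have h4 : 0 ≤ (Q A.1).toReal := ENNReal.toReal_nonneg
    rw [abs_le]; constructor <;> linarith
  rw [tv] at h
  obtain ⟨A, hA⟩ := (lt_ciSup_iff hbdd).mp h
  -- find a set where D is strictly bigger
  obtain ⟨T, hT, hgt⟩ : ∃ T, MeasurableSet T ∧ δ < (D T).toReal - (Q T).toReal := by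
    rcases lt_abs.mp hA with h1 | h1
    · exact ⟨A.1, A.2, h1⟩
    · refine ⟨A.1ᶜ, A.2.compl, ?_⟩
      have hD : (D A.1ᶜ).toReal = 1 - (D A.1).toReal := by
        rw [prob_compl_eq_one_sub A.2, ENNReal.toReal_sub_of_le prob_le_one ENNReal.one_ne_top,
          ENNReal.toReal_one]
      have hQ : (Q A.1ᶜ).toReal = 1 - (Q A.1).toReal := by
        rw [prob_compl_eq_one_sub A.2, ENNReal.toReal_sub_of_le prob_le_one ENNReal.one_ne_top,
          ENNReal.toReal_one]
      rw [hD, hQ]; linarith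
  set p : ℝ := (D T).toReal with hp
  set q : ℝ := (Q T).toReal with hq
  have hp0 : 0 ≤ p := ENNReal.toReal_nonneg
  have hq0 : 0 ≤ q := ENNReal.toReal_nonneg
  have hp1 : p ≤ 1 := hle1 D T
  have hq1 : q ≤ 1 := hle1 Q T
  have hqp : q < p := by linarith
  have ha1 : Real.toNNReal (1 - q / 2) ≤ 1 := Real.toNNReal_le_one.mpr (by linarith)
  have hb1 : Real.toNNReal ((1 - q) / 2) ≤ 1 := Real.toNNReal_le_one.mpr (by linarith)
  set f : EuclideanSpace ℝ (Fin d) → PMF Bool := fun x =>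
    if x ∈ T then PMF.bernoulli _ ha1 else PMF.bernoulli _ hb1 with hf
  -- pointwise values of f
  have hsplit : ENNReal.ofReal (1 - q / 2)
      = ENNReal.ofReal ((1 - q) / 2) + ENNReal.ofReal (1 / 2) := by
    rw [← ENNReal.ofReal_add (by linarith) (by norm_num)]
    congr 1
    ring
  have hftrue : ∀ x, f x true =
      if x ∈ T then ENNReal.ofReal (1 - q / 2) else ENNReal.ofReal ((1 - q) / 2) := by
    intro x
    by_cases hx : x ∈ T <;> simp [hf, hx, PMF.bernoulli_apply, ENNReal.ofReal]
  have hffalse : ∀ x, f x false =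
      if x ∈ T then ENNReal.ofReal (q / 2)
      else ENNReal.ofReal (q / 2) + ENNReal.ofReal (1 / 2) := by
    intro x
    have e1 : (1 : ENNReal) - ENNReal.ofReal (1 - q / 2) = ENNReal.ofReal (q / 2) := by
      rw [← ENNReal.ofReal_one, ← ENNReal.ofReal_sub _ (by linarith)]
      congr 1
      ring
    have e2 : (1 : ENNReal) - ENNReal.ofReal ((1 - q) / 2)
        = ENNReal.ofReal (q / 2) + ENNReal.ofReal (1 / 2) := by
      rw [← ENNReal.ofReal_one, ← ENNReal.ofReal_sub _ (by linarith),
        ← ENNReal.ofReal_add (by linarith) (by norm_num)]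
      congr 1
      ring
    by_cases hx : x ∈ T
    · rw [if_pos hx]
      have : f x = PMF.bernoulli (Real.toNNReal (1 - q / 2)) ha1 := by simp [hf, hx]
      rw [this, PMF.bernoulli_apply, Bool.cond_false]; exact e1
    · rw [if_neg hx]
      have : f x = PMF.bernoulli (Real.toNNReal ((1 - q) / 2)) hb1 := by simp [hf, hx]
      rw [this, PMF.bernoulli_apply, Bool.cond_false]; exact e2
  -- score computations
  have hscoreT : ∀ x, score D f true x
      = ENNReal.ofReal ((1 - q) / 2) + ENNReal.ofReal (1 / 2) * D ((fun η => x + η) ⁻¹' T) := by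
    intro x
    rw [score]
    have hfun : (fun η => (f (x + η) true : ENNReal)) = fun η =>
        if x + η ∈ T then ENNReal.ofReal ((1 - q) / 2) + ENNReal.ofReal (1 / 2)
        else ENNReal.ofReal ((1 - q) / 2) := by
      funext η
      rw [hftrue (x + η), hsplit]
    rw [hfun]
    exact lint_if D hT _ _ x
  have hscoreF : ∀ x, score D f false x
      = ENNReal.ofReal (q / 2) + ENNReal.ofReal (1 / 2) * D (((fun η => x + η) ⁻¹' T)ᶜ) := by
    intro x
    rw [score]
    have hfun : (fun η => (f (x + η) false : ENNReal)) = fun η =>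
        if x + η ∈ T then ENNReal.ofReal (q / 2)
        else ENNReal.ofReal (q / 2) + ENNReal.ofReal (1 / 2) := by
      funext η
      exact hffalse (x + η)
    rw [hfun]
    exact lint_if' D hT _ _ x
  -- the measure values at 0 and v
  have hpre0 : ((fun η => (0 : EuclideanSpace ℝ (Fin d)) + η) ⁻¹' T) = T := by
    simp [Set.preimage]
  have hprev : D ((fun η => v + η) ⁻¹' T) = Q T := by
    rw [hQdef, Measure.map_apply (measurable_add_const v) hT]
    congr 1
    ext η
    simp [add_comm]
  -- numeric values of the four scores
  have hDT : D T = ENNReal.ofReal p := (ENNReal.ofReal_toReal (measure_ne_top D T)).symm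
  have hQT : Q T = ENNReal.ofReal q := (ENNReal.ofReal_toReal (measure_ne_top Q T)).symm
  have hmul : ∀ r : ℝ, ENNReal.ofReal (1 / 2) * ENNReal.ofReal r = ENNReal.ofReal (r / 2) := by
    intro r
    rw [← ENNReal.ofReal_mul (by norm_num)]
    ring_nf
  have hcomplT : D Tᶜ = ENNReal.ofReal (1 - p) := by
    rw [prob_compl_eq_one_sub hT, hDT, ← ENNReal.ofReal_one,
      ← ENNReal.ofReal_sub _ hp0]
  have hcomplTv : D (((fun η => v + η) ⁻¹' T)ᶜ) = ENNReal.ofReal (1 - q) := by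
    rw [prob_compl_eq_one_sub (hT.preimage (measurable_const_add v)), hprev, hQT,
      ← ENNReal.ofReal_one, ← ENNReal.ofReal_sub _ hq0]
  have st0 : score D f true 0 = ENNReal.ofReal ((1 - q) / 2 + p / 2) := by
    rw [hscoreT 0, hpre0, hDT, hmul, ← ENNReal.ofReal_add (by linarith) (by linarith)]
  have sf0 : score D f false 0 = ENNReal.ofReal (q / 2 + (1 - p) / 2) := by
    rw [hscoreF 0, hpre0, hcomplT, hmul, ← ENNReal.ofReal_add (by linarith) (by linarith)]
  have stv : score D f true v = ENNReal.ofReal (1 / 2) := by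
    rw [hscoreT v, hprev, hQT, hmul, ← ENNReal.ofReal_add (by linarith) (by linarith)]
    congr 1
    ring
  have sfv : score D f false v = ENNReal.ofReal (1 / 2) := by
    rw [hscoreF v, hcomplTv, hmul, ← ENNReal.ofReal_add (by linarith) (by linarith)]
    congr 1
    ring
  -- strict inequality at 0
  have hlt0 : score D f false 0 < score D f true 0 := by
    rw [st0, sf0]
    exact ENNReal.ofReal_lt_ofReal_iff (by linarith) |>.mpr (by linarith)
  -- gOut at 0 is true
  have hg0 : gOut D f 0 = true := by
    have hall := gOut_spec D f 0 true
    cases hgc : gOut D f 0 with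
    | false =>
      exfalso
      rw [hgc] at hall
      exact absurd hall (not_le.mpr hlt0)
    | true => rfl
  -- gOut at v is false
  have hgv : gOut D f v = false := by
    have h2 : gOut D f v ≤ false := by
      refine gOut_le D f v false fun y => ?_
      cases y
      · exact le_rfl
      · rw [stv, sfv]
    cases hgc : gOut D f v with
    | false => rfl
    | true =>
      exfalso
      rw [hgc] at h2
      exact absurd h2 (by decide)
  refine ⟨f, ?_, by rw [hg0, hgv]; simp⟩
  -- the gap computation
  rw [gap, hg0]
  have hsup : (⨆ y : {y : Bool // y ≠ true}, score D f y.1 0) = score D f false 0 := by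
    apply le_antisymm
    · refine iSup_le fun y => ?_
      have : y.1 = false := by simpa using y.2
      rw [this]
    · exact le_iSup (fun y : {y : Bool // y ≠ true} => score D f y.1 0) ⟨false, by simp⟩
  rw [hsup, st0, sf0, ← ENNReal.ofReal_sub _ (by linarith)]
  exact ENNReal.ofReal_lt_ofReal_iff (by linarith) |>.mpr (by linarith)
end
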